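/- Let r ≥ 4 be an integer, ζ a primitive 2^r-th root of unity in ℂ, K = ℚ(ζ + ζ^{-1}), and α = 4 + (ζ + ζ^{-1}) - 2(ζ² + ζ^{-2}) - (ζ³ + ζ^{-3}). Then N_{K/ℚ}(α) = 8. -/

import Mathlib

open scoped IntermediateField
open Polynomial Module

set_option synthInstance.maxHeartbeats 1000000
set_option maxHeartbeats 2000000

/-- For `r ≥ 4`, `ζ` a primitive `2^r`-th root of unity,
`K = ℚ(ζ + ζ⁻¹)` and `α = 4 + (ζ + ζ⁻¹) - 2(ζ² + ζ⁻²) - (ζ³ + ζ⁻³)`,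
one has `N_{K/ℚ}(α) = 8`. -/
theorem norm_alpha_eq_eight
    (r : ℕ) (hr : 4 ≤ r) (ζ : ℂ) (hζ : IsPrimitiveRoot ζ (2 ^ r))
    (α : ℚ⟮ζ + ζ⁻¹⟯)
    (hα : (α : ℂ) = 4 + (ζ + ζ⁻¹) - 2 * (ζ ^ 2 + ζ⁻¹ ^ 2) - (ζ ^ 3 + ζ⁻¹ ^ 3)) :
    Algebra.norm ℚ α = 8 := by
  have hn0 : (2:ℕ)^r ≠ 0 := by positivity
  have h16 : (16:ℕ) ≤ 2^r := by calc (16:ℕ) = 2^4 := by norm_num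
                                    _ ≤ 2^r := Nat.pow_le_pow_right (by norm_num) hr
  have hζ0 : ζ ≠ 0 := hζ.ne_zero hn0
  have hζpow : ζ ^ (2^r) = 1 := hζ.pow_eq_one
  have habs : ‖ζ‖ = 1 := Complex.norm_eq_one_of_pow_eq_one hζpow hn0
  have hζint : IsIntegral ℚ ζ :=
    ⟨X ^ (2^r) - C 1, monic_X_pow_sub_C 1 hn0, by simp [hζpow]⟩
  have hζP : IsPrimitiveRoot ζ (((2:ℕ+)^r : ℕ+) : ℕ) := by
    rw [PNat.pow_coe]; exact_mod_cast hζ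
  set M := ℚ⟮ζ⟯ with hMdef
  have hMsub : M.toSubalgebra = Algebra.adjoin ℚ {ζ} :=
    IntermediateField.adjoin_simple_toSubalgebra_of_isAlgebraic hζint.isAlgebraic
  haveI cycM : IsCyclotomicExtension {2^r} ℚ M := by
    refine IsCyclotomicExtension.equiv _ _ _ (h := ?_) (.refl : M.toSubalgebra ≃ₐ[ℚ] _)
    rw [hMsub]
    exact hζ.adjoin_isCyclotomicExtension ℚ
  have hirr : Irreducible (cyclotomic (2^r) ℚ) :=
    cyclotomic.irreducible_rat (by positivity)
  have hirr' : Irreducible (cyclotomic (((2:ℕ+)^r : ℕ+) : ℕ) ℚ) := by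
    rwa [PNat.pow_coe]
  haveI hfinMdim : FiniteDimensional ℚ M :=
    IsCyclotomicExtension.finiteDimensional {2^r} ℚ M
  have hfinM : finrank ℚ M = 2^(r-1) := by
    rw [IsCyclotomicExtension.finrank (n := 2^r) M hirr]
    simp [Nat.totient_prime_pow Nat.prime_two (by omega : 0 < r)]
  -- the tower
  have hKM : ℚ⟮ζ + ζ⁻¹⟯ ≤ M :=
    IntermediateField.adjoin_simple_le_iff.2
      (add_mem (IntermediateField.mem_adjoin_simple_self ℚ ζ)
        (inv_mem (IntermediateField.mem_adjoin_simple_self ℚ ζ)))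
  letI : Algebra ℚ⟮ζ + ζ⁻¹⟯ M := (IntermediateField.inclusion hKM).toAlgebra
  haveI : IsScalarTower ℚ ℚ⟮ζ + ζ⁻¹⟯ M := IsScalarTower.of_algebraMap_eq' rfl
  haveI : IsScalarTower ℚ⟮ζ + ζ⁻¹⟯ M ℂ := IsScalarTower.of_algebraMap_eq' rfl
  haveI hKfin : FiniteDimensional ℚ ℚ⟮ζ + ζ⁻¹⟯ :=
    FiniteDimensional.of_injective (IsScalarTower.toAlgHom ℚ ℚ⟮ζ + ζ⁻¹⟯ M).toLinearMap
      (algebraMap ℚ⟮ζ + ζ⁻¹⟯ M).injective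
  haveI : FiniteDimensional ℚ⟮ζ + ζ⁻¹⟯ M := FiniteDimensional.right ℚ ℚ⟮ζ + ζ⁻¹⟯ M
  set ζM : M := IntermediateField.AdjoinSimple.gen ℚ ζ with hζMdef
  have hζMc : (ζM : ℂ) = ζ := rfl
  have hζM : IsPrimitiveRoot ζM (2^r) := by
    apply IsPrimitiveRoot.coe_submonoidClass_iff.1
    rw [hζMc]; exact hζ
  have hζMP : IsPrimitiveRoot ζM (((2:ℕ+)^r : ℕ+) : ℕ) := by
    rw [PNat.pow_coe]; exact_mod_cast hζM
  set γ : ℚ⟮ζ + ζ⁻¹⟯ := IntermediateField.AdjoinSimple.gen ℚ (ζ + ζ⁻¹) with hγdef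
  have hγM : ((algebraMap ℚ⟮ζ + ζ⁻¹⟯ M γ : M) : ℂ) = ζ + ζ⁻¹ := rfl
  -- ζ is not in the real field ℚ⟮ζ + ζ⁻¹⟯
  have hζconj : (starRingEnd ℂ) ζ = ζ⁻¹ := (Complex.inv_eq_conj habs).symm
  have hζnotK : ζ ∉ ℚ⟮ζ + ζ⁻¹⟯ := by
    intro hmem
    set F : IntermediateField ℚ ℂ := Subfield.toIntermediateField Complex.ofRealHom.fieldRange
      (fun x => ⟨(x : ℝ), by push_cast; simp⟩) with hFdef
    have hcF : ζ + ζ⁻¹ ∈ F := by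
      refine ⟨2 * ζ.re, ?_⟩
      rw [← hζconj, Complex.ofRealHom_eq_coe, Complex.ofReal_mul]
      rw [Complex.add_conj]
      push_cast; ring
    have hKF : ℚ⟮ζ + ζ⁻¹⟯ ≤ F := IntermediateField.adjoin_simple_le_iff.2 hcF
    obtain ⟨y, hy⟩ := hKF hmem
    have him : ζ.im = 0 := by rw [← hy]; simp [Complex.ofRealHom_eq_coe]
    have hconjζ : (starRingEnd ℂ) ζ = ζ := Complex.conj_eq_iff_im.2 him
    have : ζ ^ 2 = 1 := by
      rw [hζconj] at hconjζ
      field_simp at hconjζ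
      exact hconjζ.symm
    have hdvd := hζ.dvd_of_pow_eq_one 2 this
    have := Nat.le_of_dvd (by norm_num) hdvd
    omega
  -- minpoly of ζM over ℚ⟮ζ + ζ⁻¹⟯ has degree 2
  have hζMint : IsIntegral ℚ⟮ζ + ζ⁻¹⟯ ζM := by
    have : IsIntegral ℚ ζM := (IntermediateField.AdjoinSimple.isIntegral_gen ℚ ζ).2 hζint
    exact this.tower_top
  set q : Polynomial ℚ⟮ζ + ζ⁻¹⟯ := X^2 - C γ * X + C 1 with hqdef
  have hqmonic : q.Monic := by rw [hqdef]; monicity!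
  have hqroot : Polynomial.aeval ζM q = 0 := by
    have h0 : (((Polynomial.aeval ζM) q : M) : ℂ) = 0 := by
      simp only [hqdef, map_add, map_sub, map_mul, map_pow, aeval_X, aeval_C]
      push_cast
      rw [hγM, hζMc]
      field_simp
      ring
    exact Subtype.ext (by simpa using h0)
  have hdvd : minpoly ℚ⟮ζ + ζ⁻¹⟯ ζM ∣ q := minpoly.dvd _ _ hqroot
  have hdeg2 : (minpoly ℚ⟮ζ + ζ⁻¹⟯ ζM).natDegree = 2 := by
    have hle : (minpoly ℚ⟮ζ + ζ⁻¹⟯ ζM).natDegree ≤ 2 := by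
      have h := Polynomial.natDegree_le_of_dvd hdvd hqmonic.ne_zero
      have : q.natDegree = 2 := by rw [hqdef]; compute_degree!
      omega
    have h0 : (minpoly ℚ⟮ζ + ζ⁻¹⟯ ζM).natDegree ≠ 0 := (minpoly.natDegree_pos hζMint).ne'
    have h1 : (minpoly ℚ⟮ζ + ζ⁻¹⟯ ζM).natDegree ≠ 1 := by
      intro h
      obtain ⟨y, hy⟩ := minpoly.natDegree_eq_one_iff.1 h
      apply hζnotK
      have hyc : (y : ℂ) = ζ := by
        have hcoe : ((algebraMap ℚ⟮ζ + ζ⁻¹⟯ M y : M) : ℂ) = (y : ℂ) := rfl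
        rw [← hcoe, hy, hζMc]
      have hy2 := y.2
      rwa [hyc] at hy2
    omega
  -- [M : K] = 2
  have htopQ : IntermediateField.adjoin ℚ {ζM} = (⊤ : IntermediateField ℚ M) := by
    have key : @IntermediateField.adjoin ℚ _ M _ M.algebra' {ζM} = ⊤ := by
      apply IntermediateField.lift_injective
      rw [IntermediateField.lift_adjoin_simple, IntermediateField.lift_top]
      rfl
    convert key <;> exact Subsingleton.elim _ _
  have htop : IntermediateField.adjoin ℚ⟮ζ + ζ⁻¹⟯ {ζM} = (⊤ : IntermediateField ℚ⟮ζ + ζ⁻¹⟯ M) := by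
    rw [eq_top_iff]
    intro x _
    have hx : x ∈ IntermediateField.adjoin ℚ {ζM} := htopQ ▸ trivial
    have hmem : ζM ∈ (IntermediateField.adjoin ℚ⟮ζ + ζ⁻¹⟯ {ζM}).restrictScalars ℚ := by
      rw [IntermediateField.mem_restrictScalars]
      exact IntermediateField.subset_adjoin _ _ rfl
    exact IntermediateField.adjoin_le_iff.2 (Set.singleton_subset_iff.2 hmem) hx
  have hfinKM : finrank ℚ⟮ζ + ζ⁻¹⟯ M = 2 := by
    rw [← IntermediateField.finrank_top', ← htop, IntermediateField.adjoin.finrank hζMint, hdeg2]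
  -- norms over M
  have hm1 : Algebra.norm ℚ (-1 : M) = 1 := by
    have h : (-1 : M) = algebraMap ℚ M (-1) := by simp
    rw [h, Algebra.norm_algebraMap, hfinM]
    exact Even.neg_one_pow (by simpa using Nat.even_pow.2 ⟨even_two, by omega⟩)
  have hnorm_ζ : Algebra.norm ℚ ζM = 1 := by
    refine hζM.norm_eq_one ?_ hirr
    intro h
    have h2 : (2:ℕ)^r = 2 := h
    rw [h2] at h16
    omega
  have hnorm_sub : Algebra.norm ℚ (ζM - 1) = 2 := hζM.norm_sub_one_two (by omega) hirr
  have hhalf : ζM ^ (2^(r-1)) = -1 := by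
    have h2 : (ζM ^ (2^(r-1)))^2 = 1 := by
      rw [← pow_mul, ← pow_succ]
      have : r - 1 + 1 = r := by omega
      rw [this, hζM.pow_eq_one]
    have hne : ζM ^ (2^(r-1)) ≠ 1 :=
      hζM.pow_ne_one_of_pos_of_lt (by positivity) (Nat.pow_lt_pow_right (by norm_num) (by omega))
    have hfac : (ζM ^ (2^(r-1)) - 1) * (ζM ^ (2^(r-1)) + 1) = 0 := by linear_combination h2
    rcases mul_eq_zero.1 hfac with h | h
    · exact absurd (sub_eq_zero.1 h) hne
    · linear_combination h
  have hnegζ : IsPrimitiveRoot (-ζM) (2^r) := by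
    have hco : Nat.Coprime (2^(r-1)+1) (2^r) := by
      apply Nat.Coprime.pow_right
      rw [Nat.coprime_two_right]
      exact Even.add_one (Nat.even_pow.2 ⟨even_two, by omega⟩)
    have h := hζM.pow_of_coprime _ hco
    rwa [pow_add, pow_one, hhalf, neg_one_mul] at h
  have hnorm_add : Algebra.norm ℚ (ζM + 1) = 2 := by
    have h := hnegζ.norm_sub_one_two (by omega) hirr
    have he : -ζM - 1 = (-1 : M) * (ζM + 1) := by ring
    rw [he, map_mul, hm1, one_mul] at h
    exact h
  -- the element αM and its norm
  set αM : M := algebraMap ℚ⟮ζ + ζ⁻¹⟯ M α with hαMdef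
  have hαMc : ((αM : M) : ℂ) = (α : ℂ) := rfl
  have hprod : αM * ζM^3 = -((ζM+1)^4 * (ζM-1)^2) := by
    apply Subtype.ext
    push_cast
    rw [hαMc, hζMc, hα]
    field_simp
    ring
  have hNαM : Algebra.norm ℚ αM = 64 := by
    have h := congrArg (Algebra.norm ℚ) hprod
    rw [map_mul, map_pow, hnorm_ζ, one_pow, mul_one] at h
    rw [show -((ζM+1)^4 * (ζM-1)^2) = (-1 : M) * ((ζM+1)^4 * (ζM-1)^2) by ring] at h
    rw [map_mul, hm1, one_mul, map_mul, map_pow, map_pow, hnorm_add, hnorm_sub] at h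
    norm_num at h
    exact h
  -- tower of norms
  haveI : Algebra.IsSeparable ℚ M := inferInstance
  have hNN : Algebra.norm ℚ (Algebra.norm ℚ⟮ζ + ζ⁻¹⟯ αM) = Algebra.norm ℚ αM :=
    Algebra.norm_norm (R := ℚ) (S := ℚ⟮ζ + ζ⁻¹⟯) (a := αM)
  have hsq : (Algebra.norm ℚ α)^2 = 64 := by
    rw [hαMdef, Algebra.norm_algebraMap, hfinKM] at hNN
    rw [map_pow] at hNN
    rw [hNN]
    exact hNαM
  -- positivity via embeddings
  have hpos : 0 < Algebra.norm ℚ α := by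
    have hemb := Algebra.norm_eq_prod_embeddings ℚ ℂ (L := ℚ⟮ζ + ζ⁻¹⟯) α
    have key : ∀ σ : ℚ⟮ζ + ζ⁻¹⟯ →ₐ[ℚ] ℂ, ∃ x : ℝ, 0 < x ∧ σ α = (x:ℂ) := by
      intro σ
      haveI : Algebra.IsAlgebraic ℚ⟮ζ + ζ⁻¹⟯ M := Algebra.IsAlgebraic.of_finite _ _
      obtain ⟨τ0, hτ0⟩ := IsAlgClosed.surjective_restrictDomain_of_isAlgebraic
        (K := ℚ) (L := ℚ⟮ζ + ζ⁻¹⟯) (E := M) (M := ℂ) σ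
      have hσα : σ α = τ0 αM := by
        have h := congrArg (fun f : _ →ₐ[ℚ] ℂ => f α) hτ0
        simp only [AlgHom.restrictDomain, AlgHom.comp_apply] at h
        rw [← h, hαMdef]
        rfl
      set u := τ0 ζM with hudef
      have hu1 : u ^ (2^r) = 1 := by
        rw [hudef, ← map_pow, hζM.pow_eq_one, map_one]
      have habsu : ‖u‖ = 1 := Complex.norm_eq_one_of_pow_eq_one hu1 hn0
      have hu0 : u ≠ 0 := by
        intro h; rw [h] at habsu; simp at habsu
      have hroot : Polynomial.aeval u (cyclotomic (2^r) ℚ) = 0 := by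
        have hmin : cyclotomic (2^r) ℚ = minpoly ℚ ζM :=
          cyclotomic_eq_minpoly_rat hζM (by positivity)
        have h := Polynomial.aeval_algHom_apply τ0 ζM (minpoly ℚ ζM)
        rw [minpoly.aeval, map_zero] at h
        rw [hmin, hudef]
        exact h
      haveI : NeZero ((2^r : ℕ) : ℂ) := ⟨by exact_mod_cast hn0⟩
      have hu : IsPrimitiveRoot u (2^r) := by
        apply (Polynomial.isRoot_cyclotomic_iff (R := ℂ) (n := 2^r)).1
        rw [IsRoot.def, ← map_cyclotomic (2^r) (algebraMap ℚ ℂ), eval_map, ← aeval_def]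
        exact hroot
      have hune1 : u ≠ 1 := by
        intro h
        have h1 := hu.pow_ne_one_of_pos_of_lt (l := 1) one_ne_zero
          (lt_of_lt_of_le (by norm_num) h16)
        rw [pow_one] at h1; exact h1 h
      have hune2 : u ≠ -1 := by
        intro h
        have h1 := hu.pow_ne_one_of_pos_of_lt (l := 2) two_ne_zero
          (lt_of_lt_of_le (by norm_num) h16)
        apply h1
        simp [h]
      have hp2 : τ0 αM * u^3 = -((u+1)^4 * (u-1)^2) := by
        have h := congrArg τ0 hprod
        rw [map_mul, map_pow, map_neg, map_mul, map_pow, map_pow, map_add, map_sub,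
          map_one] at h
        exact h
      set t : ℝ := 2 * u.re with htdef
      have hut : u + u⁻¹ = (t : ℂ) := by
        rw [Complex.inv_eq_conj habsu, Complex.add_conj, htdef]
      have habsre : |u.re| ≤ 1 := by
        have := Complex.abs_re_le_norm u
        rwa [habsu] at this
      have hre1 : u.re ≠ 1 := by
        intro h
        apply hune1
        have hsq := Complex.sq_norm u
        rw [habsu] at hsq
        have him : u.im = 0 := by
          rw [Complex.normSq_apply, h] at hsq
          nlinarith
        apply Complex.ext <;> simp [h, him]
      have hre2 : u.re ≠ -1 := by
        intro h
        apply hune2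
        have hsq := Complex.sq_norm u
        rw [habsu] at hsq
        have him : u.im = 0 := by
          rw [Complex.normSq_apply, h] at hsq
          nlinarith
        apply Complex.ext <;> simp [h, him]
      have habsre' : |u.re| < 1 := lt_of_le_of_ne habsre (by
        intro h
        rcases abs_eq (by norm_num : (0:ℝ) ≤ 1) |>.1 h with h' | h'
        · exact hre1 h'
        · exact hre2 h')
      have ht2 : t < 2 := by
        have := (abs_lt.1 habsre').2
        rw [htdef]; linarith
      have htm2 : -2 < t := by
        have := (abs_lt.1 habsre').1
        rw [htdef]; linarith
      refine ⟨(t+2)^2 * (2 - t), mul_pos (pow_pos (by linarith) 2) (by linarith), ?_⟩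
      rw [hσα]
      have hcalc : τ0 αM = ((u + u⁻¹) + 2)^2 * (2 - (u + u⁻¹)) := by
        have h3 : (u:ℂ)^3 ≠ 0 := pow_ne_zero _ hu0
        rw [(eq_div_iff h3).2 hp2]
        field_simp
        ring
      rw [hcalc, hut]
      push_cast
      try ring
    choose x hxpos hx using key
    rw [Finset.prod_congr rfl (fun σ _ => hx σ)] at hemb
    rw [← Complex.ofReal_prod] at hemb
    have hcast : ((Algebra.norm ℚ α : ℚ) : ℝ) = ∏ σ, x σ := by
      apply Complex.ofReal_injective
      rw [← hemb]
      norm_cast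
    have hP : (0:ℝ) < ∏ σ, x σ := Finset.prod_pos (fun σ _ => hxpos σ)
    rw [← hcast] at hP
    exact_mod_cast hP
  nlinarith [hsq, hpos]
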